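/- arXiv:1209.2138 — 2 statements merged into one kernel-verified Lean document; each statement's English description precedes it below -/
import Mathlib

section
/- Rank-one optimality for single-quadratic-objective SDPs: consider maximizing aᴴ X a over Hermitian X ⪰ 0 subject to finitely many constraints tr(B_i X) ≤ b_i (i = 1,…,M) with B_i ⪰ 0 Hermitian and b_i ≥ 0, where a ∈ ℂⁿ. If the problem has an optimal solution, then it has an optimal solution X* with rank(X*) ≤ 1. -/
open Matrix
open scoped ComplexOrder

lemma cs_row {n : ℕ} (c w : Fin n → ℂ) :
    Complex.normSq (c ⬝ᵥ w) ≤ (∑ j, Complex.normSq (c j)) * (∑ j, Complex.normSq (w j)) := by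
  have h1 : ‖c ⬝ᵥ w‖ ≤ ∑ j, ‖c j‖ * ‖w j‖ := by
    simpa [dotProduct] using (norm_sum_le Finset.univ (fun j => c j * w j)).trans_eq
      (by simp)
  have h2 : (∑ j, ‖c j‖ * ‖w j‖) ^ 2 ≤
      (∑ j, ‖c j‖ ^ 2) * (∑ j, ‖w j‖ ^ 2) :=
    Finset.sum_mul_sq_le_sq_mul_sq _ _ _
  calc Complex.normSq (c ⬝ᵥ w) = ‖c ⬝ᵥ w‖ ^ 2 := (Complex.sq_norm _).symm
    _ ≤ (∑ j, ‖c j‖ * ‖w j‖) ^ 2 := by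
        apply pow_le_pow_left₀ (norm_nonneg _) h1
    _ ≤ (∑ j, ‖c j‖ ^ 2) * (∑ j, ‖w j‖ ^ 2) := h2
    _ = (∑ j, Complex.normSq (c j)) * (∑ j, Complex.normSq (w j)) := by
        simp [Complex.sq_norm]

open scoped MatrixOrder in
lemma psd_eq_ct_mul_self {n : ℕ} {Mx : Matrix (Fin n) (Fin n) ℂ} (hM : Mx.PosSemidef) :
    ∃ C : Matrix (Fin n) (Fin n) ℂ, Mx = Cᴴ * C :=
  CStarAlgebra.nonneg_iff_eq_star_mul_self.mp hM.nonneg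

open scoped MatrixOrder in
lemma exists_psd_sqrt {n : ℕ} {X : Matrix (Fin n) (Fin n) ℂ} (hX : X.PosSemidef) :
    ∃ S : Matrix (Fin n) (Fin n) ℂ, S.PosSemidef ∧ S * S = X :=
  ⟨CFC.sqrt X, (CFC.sqrt_nonneg X).posSemidef, CFC.sqrt_mul_sqrt_self X hX.nonneg⟩

lemma key_ineq {n : ℕ} {Mx : Matrix (Fin n) (Fin n) ℂ} (hM : Mx.PosSemidef) (w : Fin n → ℂ) :
    (star w ⬝ᵥ (Mx *ᵥ w)).re ≤ (star w ⬝ᵥ w).re * Mx.trace.re := by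
  obtain ⟨C, rfl⟩ := psd_eq_ct_mul_self hM
  have e1 : star w ⬝ᵥ ((Cᴴ * C) *ᵥ w) = star (C *ᵥ w) ⬝ᵥ (C *ᵥ w) := by
    rw [← mulVec_mulVec, dotProduct_mulVec, ← star_mulVec]
  rw [e1]
  have e2 : ∀ (u : Fin n → ℂ), (star u ⬝ᵥ u).re = ∑ j, Complex.normSq (u j) := by
    intro u
    simp [dotProduct, Complex.normSq_apply, Complex.mul_re]
  rw [e2, e2]
  have e3 : (Cᴴ * C).trace.re = ∑ i, ∑ j, Complex.normSq (C j i) := by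
    simp [trace, Matrix.mul_apply, diag, conjTranspose_apply, Complex.normSq_apply,
      Complex.mul_re]
  rw [e3]
  have h := fun i => cs_row (fun j => C i j) w
  calc ∑ i, Complex.normSq ((C *ᵥ w) i)
      ≤ ∑ i, (∑ j, Complex.normSq (C i j)) * (∑ j, Complex.normSq (w j)) :=
        Finset.sum_le_sum fun i _ => h i
    _ = (∑ j, Complex.normSq (w j)) * (∑ i, ∑ j, Complex.normSq (C j i)) := by
        rw [← Finset.sum_mul, mul_comm, Finset.sum_comm]

lemma outer_psd {n : ℕ} (u : Fin n → ℂ) : (vecMulVec u (star u)).PosSemidef := by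
  rw [show vecMulVec u (star u) = replicateCol (Fin 1) u * (replicateCol (Fin 1) u)ᴴ by
    rw [conjTranspose_replicateCol, vecMulVec_eq (Fin 1)]; rfl]
  exact posSemidef_self_mul_conjTranspose _

lemma outer_rank {n : ℕ} (u : Fin n → ℂ) : (vecMulVec u (star u)).rank ≤ 1 := by
  rw [vecMulVec_eq (Fin 1)]
  exact le_trans (rank_mul_le_right _ _) (by simpa using rank_le_card_height (replicateRow (Fin 1) (star u)))

lemma outer_mulVec {n : ℕ} (u a : Fin n → ℂ) :
    vecMulVec u (star u) *ᵥ a = (star u ⬝ᵥ a) • u := by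
  ext i
  simp [vecMulVec_apply, mulVec, dotProduct, Finset.mul_sum, mul_comm, mul_assoc, mul_left_comm]

lemma outer_dot {n : ℕ} (u a : Fin n → ℂ) :
    star a ⬝ᵥ (vecMulVec u (star u) *ᵥ a) = (Complex.normSq (star a ⬝ᵥ u) : ℂ) := by
  rw [outer_mulVec, dotProduct_smul]
  have : star u ⬝ᵥ a = starRingEnd ℂ (star a ⬝ᵥ u) := by
    simp [dotProduct, mul_comm]
  rw [this, smul_eq_mul, mul_comm, Complex.mul_conj]

lemma outer_trace {n : ℕ} (Bm : Matrix (Fin n) (Fin n) ℂ) (u : Fin n → ℂ) :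
    (Bm * vecMulVec u (star u)).trace = star u ⬝ᵥ (Bm *ᵥ u) := by
  simp [trace, Matrix.mul_apply, vecMulVec_apply, diag, dotProduct, mulVec,
    Finset.mul_sum, mul_comm, mul_assoc, mul_left_comm]

set_option maxHeartbeats 1000000 in
/-- Rank-one optimality for single-quadratic-objective SDPs: if maximizing `aᴴ X a` over
PSD `X` subject to `tr(B_i X) ≤ b_i` (with `B_i ⪰ 0`, `b_i ≥ 0`) admits an optimal
solution, then it admits an optimal solution of rank at most one. -/
theorem rank_one_optimal_sdp {n M : ℕ} (a : Fin n → ℂ)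
    (B : Fin M → Matrix (Fin n) (Fin n) ℂ) (b : Fin M → ℝ)
    (hB : ∀ i, (B i).PosSemidef) (hb : ∀ i, 0 ≤ b i)
    (feasible : Matrix (Fin n) (Fin n) ℂ → Prop)
    (hfeas : ∀ X, feasible X ↔ X.PosSemidef ∧ ∀ i, (Matrix.trace (B i * X)).re ≤ b i)
    (hopt : ∃ X, feasible X ∧ ∀ Y, feasible Y →
      (star a ⬝ᵥ (Y *ᵥ a)).re ≤ (star a ⬝ᵥ (X *ᵥ a)).re) :
    ∃ X, feasible X ∧ (∀ Y, feasible Y →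
      (star a ⬝ᵥ (Y *ᵥ a)).re ≤ (star a ⬝ᵥ (X *ᵥ a)).re) ∧ X.rank ≤ 1 := by
  classical
  obtain ⟨X, hXf, hXopt⟩ := hopt
  obtain ⟨hX, hXc⟩ := (hfeas X).mp hXf
  set t' : ℂ := star a ⬝ᵥ (X *ᵥ a) with ht'
  set t : ℝ := t'.re with ht
  have ht'0 : 0 ≤ t' := hX.dotProduct_mulVec_nonneg a
  have ht0 : 0 ≤ t := (Complex.le_def.mp ht'0).1
  have htim : t'.im = 0 := ((Complex.le_def.mp ht'0).2).symm
  have ht'eq : t' = (t : ℂ) := Complex.ext rfl (by simpa using htim)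
  rcases eq_or_lt_of_le ht0 with h0 | hpos
  · -- t = 0 : take X = 0
    refine ⟨0, (hfeas 0).mpr ⟨Matrix.PosSemidef.zero, fun i => by simpa using hb i⟩, ?_, ?_⟩
    · intro Y hY
      have := hXopt Y hY
      simp only [Matrix.zero_mulVec, dotProduct_zero, Complex.zero_re]
      calc (star a ⬝ᵥ (Y *ᵥ a)).re ≤ t := this
        _ = 0 := h0.symm
    · simp [Matrix.rank_zero]
  · -- t > 0
    obtain ⟨S, hS, hSS⟩ := exists_psd_sqrt hX
    have hSH : Sᴴ = S := hS.isHermitian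
    set w : Fin n → ℂ := S *ᵥ a with hw
    set v : Fin n → ℂ := X *ᵥ a with hv
    have hvw : v = S *ᵥ w := by rw [hv, hw, mulVec_mulVec, hSS]
    have hww : star w ⬝ᵥ w = t' := by
      rw [hw, star_mulVec, ← dotProduct_mulVec, mulVec_mulVec, hSH, hSS, ht']
    -- key bound : for each i, (star v ⬝ᵥ (B i *ᵥ v)).re ≤ t * (trace (B i * X)).re
    have hkey : ∀ i, (star v ⬝ᵥ (B i *ᵥ v)).re ≤ t * ((B i * X).trace).re := by
      intro i
      have hM : (S * B i * S).PosSemidef := by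
        have := (hB i).conjTranspose_mul_mul_same S
        rwa [hSH] at this
      have e : star v ⬝ᵥ (B i *ᵥ v) = star w ⬝ᵥ ((S * B i * S) *ᵥ w) := by
        rw [hvw, star_mulVec, ← dotProduct_mulVec, hSH, mulVec_mulVec, mulVec_mulVec,
          Matrix.mul_assoc]
      have etr : (S * B i * S).trace = (B i * X).trace := by
        rw [Matrix.trace_mul_cycle, hSS, Matrix.trace_mul_comm]
      have := key_ineq hM w
      rw [← e, hww, etr] at this
      simpa [ht] using this
    set c : ℝ := (Real.sqrt t)⁻¹ with hc
    have hc2 : c * c = t⁻¹ := by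
      rw [hc, ← mul_inv, Real.mul_self_sqrt ht0]
    set u : Fin n → ℂ := (c : ℂ) • v with hu
    refine ⟨vecMulVec u (star u), ?_, ?_, outer_rank u⟩
    · -- feasibility
      refine (hfeas _).mpr ⟨outer_psd u, fun i => ?_⟩
      rw [outer_trace]
      have e1 : star u ⬝ᵥ (B i *ᵥ u) = ((c * c : ℝ) : ℂ) * (star v ⬝ᵥ (B i *ᵥ v)) := by
        rw [hu, mulVec_smul, star_smul, smul_dotProduct, dotProduct_smul]
        push_cast
        simp [smul_eq_mul]
        ring
      rw [e1]
      have : (((c * c : ℝ) : ℂ) * (star v ⬝ᵥ (B i *ᵥ v))).re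
          = (c * c) * (star v ⬝ᵥ (B i *ᵥ v)).re := by
        simp [Complex.mul_re]
      rw [this, hc2]
      calc t⁻¹ * (star v ⬝ᵥ (B i *ᵥ v)).re ≤ t⁻¹ * (t * ((B i * X).trace).re) := by
            apply mul_le_mul_of_nonneg_left (hkey i) (inv_nonneg.mpr ht0)
        _ = ((B i * X).trace).re := by field_simp
        _ ≤ b i := hXc i
    · -- optimality
      intro Y hY
      have hval : (star a ⬝ᵥ (vecMulVec u (star u) *ᵥ a)).re = t := by
        rw [outer_dot]
        have e2 : star a ⬝ᵥ u = (c : ℂ) * t' := by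
          rw [hu, dotProduct_smul, smul_eq_mul, ht', hv]
        rw [e2, ht'eq]
        have : Complex.normSq ((c : ℂ) * (t : ℂ)) = (c * c) * (t * t) := by
          rw [Complex.normSq_mul, Complex.normSq_ofReal, Complex.normSq_ofReal]
        rw [Complex.ofReal_re, this, hc2]
        field_simp
      rw [hval]
      exact hXopt Y hY
end

section
/- Construction of a rank-one replacement preserving signal power, interference, and power budget: let S* ⪰ 0 be Hermitian, a, c₁,…,c_m ∈ ℂⁿ, and Q₁,…,Q_L ⪰ 0 Hermitian. Then there exists a rank ≤ 1 Hermitian matrix S** ⪰ 0 with aᴴ S** a ≥ aᴴ S* a, c_iᴴ S** c_i ≤ c_iᴴ S* c_i for all i, and tr(Q_l S**) ≤ tr(Q_l S*) for all l. -/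
open Matrix
open scoped ComplexOrder


lemma aux_diag_nonneg {n : ℕ} {M : Matrix (Fin n) (Fin n) ℂ} (hM : M.PosSemidef) (i : Fin n) :
    0 ≤ M i i := by
  simpa [dotProduct, mulVec, Pi.single_apply, Finset.sum_ite_eq] using hM.dotProduct_mulVec_nonneg (Pi.single i 1)

lemma aux_trace_nonneg {n : ℕ} {M : Matrix (Fin n) (Fin n) ℂ} (hM : M.PosSemidef) :
    0 ≤ M.trace := by
  rw [Matrix.trace]
  exact Finset.sum_nonneg fun i _ => aux_diag_nonneg hM i

open scoped MatrixOrder in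
lemma aux_trace_mul_nonneg {n : ℕ} {Q D : Matrix (Fin n) (Fin n) ℂ}
    (hQ : Q.PosSemidef) (hD : D.PosSemidef) : 0 ≤ (Q * D).trace := by
  obtain ⟨B, rfl⟩ := CStarAlgebra.nonneg_iff_eq_star_mul_self.mp hD.nonneg
  rw [← mul_assoc, Matrix.trace_mul_cycle]
  exact aux_trace_nonneg (hQ.mul_mul_conjTranspose_same B)

lemma aux_cs {n : ℕ} (w y : Fin n → ℂ) :
    (star w ⬝ᵥ y) * star (star w ⬝ᵥ y) ≤ (star w ⬝ᵥ w) * (star y ⬝ᵥ y) := by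
  have hW : ∀ u v : Fin n → ℂ, star u ⬝ᵥ v =
      (inner ℂ ((WithLp.equiv 2 _).symm u : EuclideanSpace ℂ (Fin n))
        ((WithLp.equiv 2 _).symm v) : ℂ) :=
    fun u v => by rw [dotProduct_comm]; rfl
  set W : EuclideanSpace ℂ (Fin n) := (WithLp.equiv 2 _).symm w
  set Y : EuclideanSpace ℂ (Fin n) := (WithLp.equiv 2 _).symm y
  rw [hW w y, hW w w, hW y y, inner_self_eq_norm_sq_to_K, inner_self_eq_norm_sq_to_K]
  have h := norm_inner_le_norm (𝕜 := ℂ) W Y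
  have h2 : (inner ℂ W Y : ℂ) * star (inner ℂ W Y : ℂ) = ((‖(inner ℂ W Y : ℂ)‖ : ℂ)) ^ 2 := by
    rw [RCLike.star_def, RCLike.mul_conj]
    norm_cast
  rw [h2]
  have h3 : (‖(inner ℂ W Y : ℂ)‖ : ℝ) ^ 2 ≤ (‖W‖ * ‖Y‖) ^ 2 :=
    pow_le_pow_left₀ (norm_nonneg _) h 2
  calc ((‖(inner ℂ W Y : ℂ)‖ : ℂ)) ^ 2 = ((‖(inner ℂ W Y : ℂ)‖ ^ 2 : ℝ) : ℂ) := by norm_cast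
    _ ≤ (((‖W‖ * ‖Y‖) ^ 2 : ℝ) : ℂ) := by exact_mod_cast h3
    _ = (‖W‖ : ℂ) ^ 2 * (‖Y‖ : ℂ) ^ 2 := by push_cast; ring

open scoped MatrixOrder in
lemma aux_sqrt {n : ℕ} {S : Matrix (Fin n) (Fin n) ℂ} (hS : S.PosSemidef) :
    ∃ B : Matrix (Fin n) (Fin n) ℂ, B.PosSemidef ∧ B * B = S :=
  ⟨CFC.sqrt S, (CFC.sqrt_nonneg S).posSemidef, CFC.sqrt_mul_sqrt_self S hS.nonneg⟩

/-- Rank-one replacement preserving signal power, interference, and power budget: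
for PSD Hermitian `S*`, vectors `a, c₁,…,c_m`, and PSD Hermitian `Q₁,…,Q_L`, there is a
PSD Hermitian `S**` of rank ≤ 1 with `aᴴ S** a ≥ aᴴ S* a`, `c_iᴴ S** c_i ≤ c_iᴴ S* c_i`
for all `i`, and `tr(Q_l S**) ≤ tr(Q_l S*)` for all `l`. -/
theorem rank_one_replacement {n m L : ℕ}
    (Sstar : Matrix (Fin n) (Fin n) ℂ) (hS : Sstar.PosSemidef)
    (a : Fin n → ℂ) (c : Fin m → (Fin n → ℂ))
    (Q : Fin L → Matrix (Fin n) (Fin n) ℂ) (hQ : ∀ l, (Q l).PosSemidef) :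
    ∃ Sss : Matrix (Fin n) (Fin n) ℂ, Sss.PosSemidef ∧ Sss.rank ≤ 1 ∧
      (star a ⬝ᵥ (Sss *ᵥ a)).re ≥ (star a ⬝ᵥ (Sstar *ᵥ a)).re ∧
      (∀ i, (star (c i) ⬝ᵥ (Sss *ᵥ c i)).re ≤ (star (c i) ⬝ᵥ (Sstar *ᵥ c i)).re) ∧
      (∀ l, (Matrix.trace (Q l * Sss)).re ≤ (Matrix.trace (Q l * Sstar)).re) := by
  classical
  obtain ⟨B, hBpsd', hBB'⟩ := aux_sqrt hS
  have hBpsd := hBpsd'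
  have hBh : Bᴴ = B := hBpsd.isHermitian
  have hBB : B * B = Sstar := hBB'
  set w : Fin n → ℂ := B *ᵥ a with hw
  have hq : ∀ x, star x ⬝ᵥ (Sstar *ᵥ x) = star (B *ᵥ x) ⬝ᵥ (B *ᵥ x) := by
    intro x
    rw [← hBB, ← mulVec_mulVec, Matrix.star_mulVec, hBh, ← Matrix.dotProduct_mulVec]
  by_cases hw0 : w = 0
  · refine ⟨0, Matrix.PosSemidef.zero, ?_, ?_, ?_, ?_⟩
    · simp [Matrix.rank_zero]
    · have : star a ⬝ᵥ (Sstar *ᵥ a) = 0 := by rw [hq a, ← hw, hw0]; simp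
      simp [this]
    · intro i
      have h1 := hS.re_dotProduct_nonneg (c i)
      simpa using h1
    · intro l
      have h1 := aux_trace_mul_nonneg (hQ l) hS
      have := (Complex.le_def.mp h1).1
      simpa using this
  · set α : ℂ := star w ⬝ᵥ w with hα
    have hα0 : α ≠ 0 := fun h => hw0 ((dotProduct_star_self_eq_zero).mp h)
    have hαnn : 0 ≤ α := Finset.sum_nonneg fun i _ => star_mul_self_nonneg (w i)
    have hαim : α.im = 0 := ((Complex.le_def.mp hαnn).2).symm
    have hαstar : star α = α := Complex.conj_eq_iff_im.mpr hαim
    have hαinv_nn : 0 ≤ α⁻¹ := by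
      have : α = ((α.re : ℝ) : ℂ) := (Complex.re_add_im α ▸ by rw [hαim]; simp)
      rw [this, ← Complex.ofReal_inv]
      exact Complex.zero_le_real.mpr (inv_nonneg.mpr (Complex.zero_le_real.mp (this ▸ hαnn)))
    set u : Fin n → ℂ := B *ᵥ w with hu
    set Sss : Matrix (Fin n) (Fin n) ℂ := α⁻¹ • vecMulVec u (star u) with hSss
    have hvm : ∀ x, vecMulVec u (star u) *ᵥ x = (star u ⬝ᵥ x) • u := by
      intro x
      ext i
      simp [Matrix.vecMulVec_apply, Matrix.mulVec, dotProduct, Finset.mul_sum,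
        mul_comm, mul_assoc, mul_left_comm]
    have hstar_dp : ∀ x, star x ⬝ᵥ u = star (star u ⬝ᵥ x) := by
      intro x
      rw [Matrix.star_dotProduct]
    have hform : ∀ x, star x ⬝ᵥ (Sss *ᵥ x) = α⁻¹ * ((star u ⬝ᵥ x) * star (star u ⬝ᵥ x)) := by
      intro x
      rw [hSss, Matrix.smul_mulVec, dotProduct_smul, hvm x,
        dotProduct_smul, hstar_dp x]
      simp [smul_eq_mul]
    have hz : ∀ x, star u ⬝ᵥ x = star w ⬝ᵥ (B *ᵥ x) := by
      intro x
      rw [hu, Matrix.star_mulVec, hBh, ← Matrix.dotProduct_mulVec]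
    -- S** is PSD
    have hherm : Sss.IsHermitian := by
      have : Sssᴴ = Sss := by
        ext i j
        simp only [hSss, Matrix.conjTranspose_apply, Matrix.smul_apply,
          Matrix.vecMulVec_apply, Pi.star_apply, star_mul', smul_eq_mul, star_star]
        rw [star_inv₀, hαstar]
        ring
      exact this
    have hSssPsd : Sss.PosSemidef := by
      refine .of_dotProduct_mulVec_nonneg hherm fun x => ?_
      rw [hform x]
      exact mul_nonneg hαinv_nn (mul_star_self_nonneg _)
    -- D := Sstar - Sss is PSD
    have hD : (Sstar - Sss).PosSemidef := by
      refine .of_dotProduct_mulVec_nonneg (hS.1.sub hherm) fun x => ?_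
      rw [Matrix.sub_mulVec, dotProduct_sub, sub_nonneg, hform x, hz x]
      set y : Fin n → ℂ := B *ᵥ x with hy
      have hcs := aux_cs w y
      have := mul_le_mul_of_nonneg_left hcs hαinv_nn
      calc α⁻¹ * (star w ⬝ᵥ y * star (star w ⬝ᵥ y))
          ≤ α⁻¹ * (α * (star y ⬝ᵥ y)) := this
        _ = star y ⬝ᵥ y := by field_simp
        _ = star x ⬝ᵥ (Sstar *ᵥ x) := (hq x).symm
      -- careful: goal orientation
    refine ⟨Sss, hSssPsd, ?_, ?_, ?_, ?_⟩
    · -- rank ≤ 1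
      have heq : Sss = vecMulVec (α⁻¹ • u) (star u) := by
        ext i j
        simp [hSss, Matrix.vecMulVec_apply, smul_eq_mul, mul_assoc]
      rw [heq, Matrix.vecMulVec_eq (Fin 1)]
      calc (Matrix.replicateCol (Fin 1) (α⁻¹ • u) * Matrix.replicateRow (Fin 1) (star u)).rank
          ≤ (Matrix.replicateCol (Fin 1) (α⁻¹ • u)).rank := Matrix.rank_mul_le_left _ _
        _ ≤ 1 := by simpa using Matrix.rank_le_card_width (Matrix.replicateCol (Fin 1) (α⁻¹ • u))
    · -- signal power
      have h1 : star a ⬝ᵥ (Sss *ᵥ a) = α := by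
        rw [hform a, hz a, ← hw, ← hα, hαstar]
        field_simp
      have h2 : star a ⬝ᵥ (Sstar *ᵥ a) = α := by rw [hq a, ← hw, ← hα]
      rw [h1, h2]
    · intro i
      have h := (Complex.le_def.mp (hD.dotProduct_mulVec_nonneg (c i))).1
      rw [Matrix.sub_mulVec, dotProduct_sub] at h
      simp only [Complex.sub_re, Complex.zero_re] at h
      linarith
    · intro l
      have h := (Complex.le_def.mp (aux_trace_mul_nonneg (hQ l) hD)).1
      rw [mul_sub, Matrix.trace_sub] at h
      simp only [Complex.sub_re, Complex.zero_re] at h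
      linarith
end
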